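/- The matrix e^{A₋T} − I is invertible, the improper integral ∫_{t}^{+∞} e^{A₋(s−t)} g(s) ds converges for every t ∈ ℝ, and for every t ∈ [0,T] one has e^{A₋(T−t)}(e^{A₋ T} − I)^{−1} ∫₀^T e^{A₋ s} g(s) ds − ∫_t^T e^{A₋(s−t)} g(s) ds = −∫_{t}^{+∞} e^{A₋(s−t)} g(s) ds. -/

import Mathlib

open MeasureTheory intervalIntegral

set_option maxHeartbeats 1000000 in
/-- Fix `T > 0`.  Let `A₋` be a real square matrix (here, a linear
operator on `ℝ^{m₋}`) with constants `c > 0`, `δ > 0` such that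
`‖e^{A₋ t}‖ ≤ c e^{−δt}` for all `t ≥ 0`, and let `g : ℝ → ℝ^{m₋}` be continuous and
`T`-periodic.  Then `e^{A₋T} − I` is invertible, the improper integral
`∫_{t}^{+∞} e^{A₋(s−t)} g(s) ds` converges for every `t ∈ ℝ`, and for every
`t ∈ [0,T]`:
`e^{A₋(T−t)}(e^{A₋T} − I)⁻¹ ∫₀^T e^{A₋ s} g(s) ds − ∫_t^T e^{A₋(s−t)} g(s) ds
  = −∫_{t}^{+∞} e^{A₋(s−t)} g(s) ds`. -/
theorem stmt7 {mm : ℕ} (T : ℝ) (hT : 0 < T)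
    (A : (Fin mm → ℝ) →L[ℝ] (Fin mm → ℝ)) (c δ : ℝ) (hc : 0 < c) (hδ : 0 < δ)
    (hA : ∀ t : ℝ, 0 ≤ t → ‖NormedSpace.exp (t • A)‖ ≤ c * Real.exp (-δ * t))
    (g : ℝ → Fin mm → ℝ) (hg : Continuous g) (hgper : ∀ s, g (s + T) = g s) :
    IsUnit (NormedSpace.exp (T • A) - 1) ∧
    (∀ t : ℝ, IntegrableOn (fun s => NormedSpace.exp ((s - t) • A) (g s)) (Set.Ici t)) ∧
    ∀ t ∈ Set.Icc (0 : ℝ) T,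
      NormedSpace.exp ((T - t) • A)
          (Ring.inverse (NormedSpace.exp (T • A) - 1)
            (∫ s in (0 : ℝ)..T, NormedSpace.exp (s • A) (g s))) -
        (∫ s in t..T, NormedSpace.exp ((s - t) • A) (g s)) =
      -∫ s in Set.Ici t, NormedSpace.exp ((s - t) • A) (g s) := by
  let +nondep : NormedAlgebra ℚ ((Fin mm → ℝ) →L[ℝ] (Fin mm → ℝ)) := .restrictScalars ℚ ℝ _
  have hper : Function.Periodic g T := hgper
  have hexp_add : ∀ a b : ℝ, NormedSpace.exp ((a + b) • A)
      = NormedSpace.exp (a • A) * NormedSpace.exp (b • A) := by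
    intro a b
    rw [add_smul]
    exact NormedSpace.exp_add_of_commute (((Commute.refl A).smul_left a).smul_right b)
  -- bound on g
  obtain ⟨M, hM⟩ := (isCompact_Icc : IsCompact (Set.Icc (0:ℝ) T)).exists_bound_of_continuousOn
    hg.continuousOn
  have hgM : ∀ s : ℝ, ‖g s‖ ≤ M := by
    intro s
    obtain ⟨y, hy, hgy⟩ := hper.exists_mem_Ico₀ hT s
    rw [hgy]
    exact hM y ⟨hy.1, hy.2.le⟩
  have hM0 : 0 ≤ M := le_trans (norm_nonneg _) (hgM 0)
  -- continuity of the integrand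
  have hcont : ∀ t : ℝ, Continuous (fun s => NormedSpace.exp ((s - t) • A) (g s)) := by
    intro t
    exact (NormedSpace.exp_continuous.comp ((continuous_id.sub continuous_const).smul
      continuous_const)).clm_apply hg
  -- pointwise bound
  have hbound : ∀ t s : ℝ, t ≤ s →
      ‖NormedSpace.exp ((s - t) • A) (g s)‖ ≤ (c * M) * Real.exp (-δ * (s - t)) := by
    intro t s hts
    calc ‖NormedSpace.exp ((s - t) • A) (g s)‖
        ≤ ‖NormedSpace.exp ((s - t) • A)‖ * ‖g s‖ := ContinuousLinearMap.le_opNorm _ _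
      _ ≤ (c * Real.exp (-δ * (s - t))) * M := by
          exact mul_le_mul (hA _ (sub_nonneg.2 hts)) (hgM s) (norm_nonneg _)
            (mul_nonneg hc.le (Real.exp_nonneg _))
      _ = (c * M) * Real.exp (-δ * (s - t)) := by ring
  -- integrability
  have hInt : ∀ t : ℝ,
      IntegrableOn (fun s => NormedSpace.exp ((s - t) • A) (g s)) (Set.Ici t) := by
    intro t
    rw [integrableOn_Ici_iff_integrableOn_Ioi]
    have hmaj : IntegrableOn (fun s => (c * M * Real.exp (δ * t)) * Real.exp (-δ * s))
        (Set.Ioi t) := (exp_neg_integrableOn_Ioi t hδ).const_mul _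
    refine Integrable.mono' hmaj ((hcont t).aestronglyMeasurable) ?_
    filter_upwards [ae_restrict_mem measurableSet_Ioi] with s hs
    calc ‖NormedSpace.exp ((s - t) • A) (g s)‖
        ≤ (c * M) * Real.exp (-δ * (s - t)) := hbound t s (le_of_lt hs)
      _ = (c * M * Real.exp (δ * t)) * Real.exp (-δ * s) := by
          rw [mul_assoc, mul_assoc, ← Real.exp_add, mul_assoc]; ring_nf
  -- splitting the improper integral
  have hsplit : ∀ t u : ℝ, t ≤ u →
      (∫ s in Set.Ici t, NormedSpace.exp ((s - t) • A) (g s))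
        = (∫ s in t..u, NormedSpace.exp ((s - t) • A) (g s))
          + ∫ s in Set.Ici u, NormedSpace.exp ((s - t) • A) (g s) := by
    intro t u htu
    rw [← Set.Ico_union_Ici_eq_Ici htu, setIntegral_union (Set.disjoint_left.mpr fun x hx hx2 => hx.2.not_ge hx2)
      measurableSet_Ici ((hInt t).mono_set Set.Ico_subset_Ici_self)
      ((hInt t).mono_set (Set.Ici_subset_Ici.mpr htu))]
    rw [intervalIntegral.integral_of_le htu, integral_Ico_eq_integral_Ioo,
      integral_Ioc_eq_integral_Ioo]
  -- translation invariance
  have htrans : (∫ s in Set.Ici T, NormedSpace.exp ((s - T) • A) (g s))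
      = ∫ s in Set.Ici (0:ℝ), NormedSpace.exp ((s - 0) • A) (g s) := by
    have := (measurePreserving_add_right (volume : Measure ℝ) T).setIntegral_preimage_emb
      (MeasurableEquiv.addRight T).measurableEmbedding
      (fun s => NormedSpace.exp ((s - T) • A) (g s)) (Set.Ici T)
    rw [← this]
    have hpre : (fun x : ℝ => x + T) ⁻¹' Set.Ici T = Set.Ici 0 := by
      ext x; simp
    rw [show ((· + T) : ℝ → ℝ) ⁻¹' Set.Ici T = Set.Ici 0 from hpre]
    refine setIntegral_congr_fun measurableSet_Ici (fun x _ => ?_)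
    simp only [add_sub_cancel_right, hgper, sub_zero]
  -- factoring the semigroup out of the tail integral
  have hfac : ∀ t u : ℝ,
      (∫ s in Set.Ici u, NormedSpace.exp ((s - t) • A) (g s))
        = NormedSpace.exp ((u - t) • A)
            (∫ s in Set.Ici u, NormedSpace.exp ((s - u) • A) (g s)) := by
    intro t u
    rw [← ContinuousLinearMap.integral_comp_comm _ (hInt u)]
    refine setIntegral_congr_fun measurableSet_Ici (fun s _ => ?_)
    rw [← ContinuousLinearMap.comp_apply, ← ContinuousLinearMap.mul_def, ← hexp_add]
    norm_num
  -- powers of the monodromy operator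
  have hXpow : ∀ n : ℕ, NormedSpace.exp (T • A) ^ n
      = NormedSpace.exp (((n : ℝ) * T) • A) := by
    intro n
    rw [← NormedSpace.exp_nsmul]
    congr 1
    rw [← Nat.cast_smul_eq_nsmul ℝ, smul_smul]
  -- invertibility of exp(TA) - 1
  have hunit : IsUnit (NormedSpace.exp (T • A) - 1) := by
    obtain ⟨n, hn⟩ : ∃ n : ℕ, Real.exp (-δ * T) ^ n < 1 / c := by
      refine exists_pow_lt_of_lt_one (by positivity) ?_
      rw [Real.exp_lt_one_iff]
      nlinarith
    have hXn : ‖NormedSpace.exp (T • A) ^ n‖ < 1 := by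
      rw [hXpow n]
      refine lt_of_le_of_lt (hA _ (by positivity)) ?_
      have : Real.exp (-δ * ((n : ℝ) * T)) = Real.exp (-δ * T) ^ n := by
        rw [← Real.exp_nat_mul]; ring_nf
      rw [this]
      calc c * Real.exp (-δ * T) ^ n < c * (1 / c) := by
            exact (mul_lt_mul_iff_right₀ hc).mpr hn
        _ = 1 := by field_simp
    have hu2 : IsUnit (NormedSpace.exp (T • A) ^ n - 1) := by
      have := (Units.oneSub (NormedSpace.exp (T • A) ^ n) hXn).isUnit
      rw [show NormedSpace.exp (T • A) ^ n - 1
        = -(1 - NormedSpace.exp (T • A) ^ n) from (neg_sub _ _).symm]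
      exact this.neg
    have hcomm : Commute (∑ i ∈ Finset.range n, NormedSpace.exp (T • A) ^ i)
        (NormedSpace.exp (T • A) - 1) := by
      refine Commute.sub_right ?_ (Commute.one_right _)
      exact Commute.sum_left _ _ _ fun i _ => (Commute.refl _).pow_left i
    have := hcomm.isUnit_mul_iff.mp (by rwa [geom_sum_mul])
    exact this.2
  -- the key recursion
  have hrec : ∀ t : ℝ, t ≤ T →
      (∫ s in Set.Ici t, NormedSpace.exp ((s - t) • A) (g s))
        = (∫ s in t..T, NormedSpace.exp ((s - t) • A) (g s))
          + NormedSpace.exp ((T - t) • A)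
              (∫ s in Set.Ici (0:ℝ), NormedSpace.exp ((s - 0) • A) (g s)) := by
    intro t ht
    rw [hsplit t T ht, hfac t T, htrans]
  have h00 : (∫ s in (0:ℝ)..T, NormedSpace.exp ((s - 0) • A) (g s))
      = ∫ s in (0:ℝ)..T, NormedSpace.exp (s • A) (g s) :=
    intervalIntegral.integral_congr fun s _ => by rw [sub_zero]
  -- solving for the value at 0
  have hF0 : (∫ s in Set.Ici (0:ℝ), NormedSpace.exp ((s - 0) • A) (g s))
      = -(Ring.inverse (NormedSpace.exp (T • A) - 1)
          (∫ s in (0:ℝ)..T, NormedSpace.exp (s • A) (g s))) := by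
    have h0 := hrec 0 hT.le
    rw [h00, sub_zero] at h0
    have hEF : (NormedSpace.exp (T • A) - 1)
        (∫ s in Set.Ici (0:ℝ), NormedSpace.exp ((s - 0) • A) (g s))
        = -(∫ s in (0:ℝ)..T, NormedSpace.exp (s • A) (g s)) := by
      rw [ContinuousLinearMap.sub_apply, ContinuousLinearMap.one_apply]
      nth_rewrite 2 [h0]
      abel
    have h1 : Ring.inverse (NormedSpace.exp (T • A) - 1)
        ((NormedSpace.exp (T • A) - 1)
          (∫ s in Set.Ici (0:ℝ), NormedSpace.exp ((s - 0) • A) (g s)))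
        = ∫ s in Set.Ici (0:ℝ), NormedSpace.exp ((s - 0) • A) (g s) := by
      rw [← ContinuousLinearMap.comp_apply, ← ContinuousLinearMap.mul_def,
        Ring.inverse_mul_cancel _ hunit, ContinuousLinearMap.one_apply]
    rw [hEF, map_neg] at h1
    exact h1.symm
  refine ⟨hunit, hInt, fun t ht => ?_⟩
  rw [hrec t ht.2, hF0, map_neg]
  abel
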